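/- Let n and k be positive integers with gcd(n, k) = 1 and let q = 2^k. Let u ∈ F_{2^n} with u ∉ F_4, and set a = (u + u^q)^{q^2+1} / (u + u^{q^2})^{q+1}. Then the three elements x₁ = 1/(1 + (u + u^q)^{q-1}), x₂ = u^{q^2 - q}/(1 + (u + u^q)^{q-1}), and x₃ = (u + 1)^{q^2 - q}/(1 + (u + u^q)^{q-1}) are pairwise distinct solutions of the equation x^{q+1} + x + a = 0 in F_{2^n}. -/

import Mathlib

private lemma pow_two_pow_inj {F : Type*} [Field F] [CharP F 2] (j : ℕ) {x y : F}
    (h : x ^ 2 ^ j = y ^ 2 ^ j) : x = y := by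
  have h0 : (x - y) ^ 2 ^ j = 0 := by
    rw [sub_pow_char_pow, h, sub_self]
  have := pow_eq_zero_iff (by positivity : 0 < 2 ^ j).ne' |>.mp h0
  exact sub_eq_zero.mp this

private lemma fix_mul {F : Type*} [Field F] {u : F} {m : ℕ} (h : u ^ 2 ^ m = u) :
    ∀ j, u ^ 2 ^ (m * j) = u := by
  intro j; induction j with
  | zero => simp
  | succ j ih => rw [Nat.mul_succ, pow_add, pow_mul, ih, h]

private lemma fix_gcd {F : Type*} [Field F] [CharP F 2] {u : F} :
    ∀ a b : ℕ, u ^ 2 ^ a = u → u ^ 2 ^ b = u → u ^ 2 ^ Nat.gcd a b = u := by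
  intro a b
  induction a, b using Nat.gcd.induction with
  | H0 n => intro _ h; simpa using h
  | H1 m n hm ih =>
    intro h1 h2
    rw [Nat.gcd_rec]
    refine ih ?_ h1
    have hj := fix_mul h1 (n / m)
    apply pow_two_pow_inj (m * (n / m))
    rw [← pow_mul, ← pow_add, Nat.add_comm, Nat.div_add_mod, h2, hj]


/-- For `gcd(n,k) = 1`, `q = 2^k`, `u ∈ F_{2^n}` with `u ∉ F_4`
(i.e. `u^4 ≠ u`) and `a = (u + u^q)^(q^2+1) / (u + u^(q^2))^(q+1)`, the elements
`x₁ = 1/(1 + (u + u^q)^(q-1))`, `x₂ = u^(q^2-q)/(1 + (u + u^q)^(q-1))`,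
`x₃ = (u+1)^(q^2-q)/(1 + (u + u^q)^(q-1))` are pairwise distinct solutions of
`x^(q+1) + x + a = 0`. -/
theorem three_explicit_solutions (n k : ℕ) (hn : 0 < n) (hk : 0 < k)
    (hgcd : Nat.gcd n k = 1) (q : ℕ) (hq : q = 2 ^ k)
    (F : Type*) [Field F] [Fintype F] (hcard : Fintype.card F = 2 ^ n)
    (u : F) (hu : u ^ 4 ≠ u)
    (a : F) (ha : a = (u + u ^ q) ^ (q ^ 2 + 1) / (u + u ^ (q ^ 2)) ^ (q + 1))
    (x₁ x₂ x₃ : F)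
    (hx₁ : x₁ = 1 / (1 + (u + u ^ q) ^ (q - 1)))
    (hx₂ : x₂ = u ^ (q ^ 2 - q) / (1 + (u + u ^ q) ^ (q - 1)))
    (hx₃ : x₃ = (u + 1) ^ (q ^ 2 - q) / (1 + (u + u ^ q) ^ (q - 1))) :
    x₁ ≠ x₂ ∧ x₁ ≠ x₃ ∧ x₂ ≠ x₃ ∧
    x₁ ^ (q + 1) + x₁ + a = 0 ∧
    x₂ ^ (q + 1) + x₂ + a = 0 ∧
    x₃ ^ (q + 1) + x₃ + a = 0 := by
  -- characteristic 2
  have hchar : CharP F 2 := by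
    haveI : CharP F (ringChar F) := ringChar.charP F
    obtain ⟨m, hp, hFcard⟩ := FiniteField.card F (ringChar F)
    have hdvd : ringChar F ∣ 2 ^ n := by
      rw [← hcard, hFcard]; exact dvd_pow_self _ m.ne_zero
    have h2 : ringChar F = 2 :=
      (Nat.prime_dvd_prime_iff_eq hp Nat.prime_two).mp (hp.dvd_of_dvd_pow hdvd)
    rw [← h2]; exact ringChar.charP F
  haveI := hchar
  haveI : Fact (Nat.Prime 2) := ⟨Nat.prime_two⟩
  have h2 : (2 : F) = 0 := by exact_mod_cast CharP.cast_eq_zero F 2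
  have hu0 : u ≠ 0 := fun h => hu (by simp [h])
  have hu1 : u ≠ 1 := fun h => hu (by simp [h])
  have hq2 : 2 ≤ q := by subst hq; calc 2 = 2 ^ 1 := rfl
                                      _ ≤ 2 ^ k := Nat.pow_le_pow_right (by norm_num) hk
  have hfrob : ∀ x y : F, (x + y) ^ q = x ^ q + y ^ q := by
    intro x y; rw [hq]; exact add_pow_char_pow (R := F) (p := 2) (n := k) (x := x) (y := y)
  have hinjq : ∀ x y : F, x ^ q = y ^ q → x = y := by
    intro x y h; rw [hq] at h; exact pow_two_pow_inj k h
  -- u is not fixed by x ↦ x^{q^2}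
  have hB : u ^ (q ^ 2) ≠ u := by
    intro h
    have h1 : u ^ 2 ^ (k * 2) = u := by
      rw [pow_mul 2 k 2, ← hq]; exact h
    have h2' : u ^ 2 ^ n = u := by rw [← hcard]; exact FiniteField.pow_card u
    have hg := fix_gcd n (k * 2) h2' h1
    have hgd : Nat.gcd n (k * 2) ∣ 2 := by
      rw [Nat.gcd_comm, Nat.Coprime.gcd_mul_left_cancel 2 (Nat.coprime_comm.mp hgcd),
        Nat.gcd_comm]
      exact Nat.gcd_dvd_right n 2
    obtain ⟨c, hc⟩ := hgd
    apply hu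
    have := fix_mul hg c
    rw [← hc] at this
    simpa using this
  have hA : u ^ q ≠ u := by
    intro h
    apply hB
    rw [pow_two, pow_mul, h, h]
  -- notation
  set A : F := u + u ^ q with hAdef
  set B : F := u + u ^ (q ^ 2) with hBdef
  have hAne : A ≠ 0 := fun h => hA (by linear_combination h - u * h2)
  have hBne : B ≠ 0 := fun h => hB (by linear_combination h - u * h2)
  have hAq : A ^ q = u ^ q + u ^ (q ^ 2) := by
    rw [hAdef, hfrob, ← pow_mul, ← pow_two]
  have hBq : B ^ q = u ^ q + u ^ (q ^ 3) := by
    rw [hBdef, hfrob, ← pow_mul, ← pow_succ]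
  have hAq2 : A ^ (q ^ 2) = u ^ (q ^ 2) + u ^ (q ^ 3) := by
    have e : A ^ (q ^ 2) = (A ^ q) ^ q := by rw [← pow_mul, ← pow_two]
    rw [e, hAq, hfrob, ← pow_mul, ← pow_mul, ← pow_two, ← pow_succ]
  have hDA : (1 + A ^ (q - 1)) * A = B := by
    have h1 : A ^ (q - 1) * A = A ^ q := by
      have := pow_sub_mul_pow A (show 1 ≤ q by omega)
      simpa using this
    calc (1 + A ^ (q - 1)) * A = A + A ^ (q - 1) * A := by ring
      _ = A + A ^ q := by rw [h1]
      _ = B := by rw [hAq, hAdef, hBdef]; linear_combination (u ^ q) * h2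
  have hDne : (1 + A ^ (q - 1)) ≠ 0 := by
    intro h; apply hBne; rw [← hDA, h, zero_mul]
  have hqq2 : q ≤ q ^ 2 := Nat.le_self_pow (by norm_num) q
  have hq23 : q ^ 2 ≤ q ^ 3 := Nat.pow_le_pow_right (by omega) (by norm_num)
  have he : (q ^ 2 - q) * q = q ^ 3 - q ^ 2 := by
    rw [Nat.sub_mul]; congr 1 <;> ring
  have hm2 : u ^ (q ^ 2 - q) * u ^ q = u ^ (q ^ 2) := pow_sub_mul_pow u hqq2
  have hm2q : (u ^ (q ^ 2 - q)) ^ q * u ^ (q ^ 2) = u ^ (q ^ 3) := by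
    rw [← pow_mul, he]; exact pow_sub_mul_pow u hq23
  have hm3 : (u + 1) ^ (q ^ 2 - q) * (u + 1) ^ q = (u + 1) ^ (q ^ 2) :=
    pow_sub_mul_pow _ hqq2
  have hm3q : ((u + 1) ^ (q ^ 2 - q)) ^ q * (u + 1) ^ (q ^ 2) = (u + 1) ^ (q ^ 3) := by
    rw [← pow_mul, he]; exact pow_sub_mul_pow _ hq23
  have hP : (u + 1) ^ q = u ^ q + 1 := by rw [hfrob, one_pow]
  have hP2 : (u + 1) ^ (q ^ 2) = u ^ (q ^ 2) + 1 := by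
    have e : (u + 1) ^ (q ^ 2) = ((u + 1) ^ q) ^ q := by rw [← pow_mul, ← pow_two]
    rw [e, hP, hfrob, one_pow, ← pow_mul, ← pow_two]
  have hP3 : (u + 1) ^ (q ^ 3) = u ^ (q ^ 3) + 1 := by
    have e : (u + 1) ^ (q ^ 3) = ((u + 1) ^ (q ^ 2)) ^ q := by rw [← pow_mul, ← pow_succ]
    rw [e, hP2, hfrob, one_pow, ← pow_mul, ← pow_succ]
  have huq0 : u ^ q ≠ 0 := pow_ne_zero _ hu0
  have hu10 : u + 1 ≠ 0 := fun h => hu1 (by linear_combination h - h2)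
  have hP0 : (u + 1) ^ q ≠ 0 := pow_ne_zero _ hu10
  -- distinctness
  have d12 : x₁ ≠ x₂ := by
    rw [hx₁, hx₂]
    intro h
    rw [div_eq_div_iff hDne hDne] at h
    have hm : (1 : F) = u ^ (q ^ 2 - q) := mul_right_cancel₀ hDne h
    exact hA (hinjq (u ^ q) u (by rw [← pow_mul, ← pow_two, ← hm2, ← hm, one_mul]))
  have d13 : x₁ ≠ x₃ := by
    rw [hx₁, hx₃]
    intro h
    rw [div_eq_div_iff hDne hDne] at h
    have hm : (1 : F) = (u + 1) ^ (q ^ 2 - q) := mul_right_cancel₀ hDne h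
    have h1 : (u + 1) ^ q = u + 1 :=
      hinjq _ _ (by rw [← pow_mul, ← pow_two, ← hm3, ← hm, one_mul])
    rw [hP] at h1
    exact hA (by linear_combination h1)
  have d23 : x₂ ≠ x₃ := by
    rw [hx₂, hx₃]
    intro h
    rw [div_eq_div_iff hDne hDne] at h
    have hm : u ^ (q ^ 2 - q) = (u + 1) ^ (q ^ 2 - q) := mul_right_cancel₀ hDne h
    have key : u ^ (q ^ 2) * (u + 1) ^ q = (u + 1) ^ (q ^ 2) * u ^ q := by
      rw [← hm2, ← hm3, hm]; ring
    rw [hP, hP2] at key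
    have h1 : u ^ (q ^ 2) = u ^ q := by linear_combination key
    exact hA (hinjq (u ^ q) u (by rw [← pow_mul, ← pow_two]; exact h1))
  -- rewriting x = c*A/B
  have hdiv : ∀ c : F, c / (1 + A ^ (q - 1)) = c * A / B := by
    intro c
    rw [div_eq_div_iff hDne hBne]
    linear_combination (-c) * hDA
  -- the main verification lemma
  have main : ∀ c : F, c ^ q * c * A ^ q + c * B ^ q + A ^ (q ^ 2) = 0 →
      (c * A / B) ^ (q + 1) + c * A / B + A ^ (q ^ 2 + 1) / B ^ (q + 1) = 0 := by
    intro c hc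
    have e1 : (c * A / B) ^ (q + 1) = c ^ q * c * (A ^ q * A) / (B ^ q * B) := by
      rw [div_pow, pow_succ, pow_succ, mul_pow]; ring
    have e2 : A ^ (q ^ 2 + 1) = A ^ (q ^ 2) * A := pow_succ _ _
    have e3 : B ^ (q + 1) = B ^ q * B := pow_succ _ _
    have hBqne : B ^ q ≠ 0 := pow_ne_zero _ hBne
    rw [e1, e2, e3]
    have e4 : c * A / B = c * B ^ q * A / (B ^ q * B) := by
      rw [show c * B ^ q * A = B ^ q * (c * A) by ring, mul_div_mul_left _ _ hBqne]
    rw [e4, ← add_div, ← add_div]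
    have e5 : c ^ q * c * (A ^ q * A) + c * B ^ q * A + A ^ (q ^ 2) * A = 0 := by
      linear_combination A * hc
    rw [e5, zero_div]
  -- the three equations
  have hc1 : (1 : F) ^ q * 1 * A ^ q + 1 * B ^ q + A ^ (q ^ 2) = 0 := by
    simp only [one_pow, one_mul]
    linear_combination hAq + hBq + hAq2 + (u ^ q + u ^ (q ^ 2) + u ^ (q ^ 3)) * h2
  have hc2 : (u ^ (q ^ 2 - q)) ^ q * u ^ (q ^ 2 - q) * A ^ q + u ^ (q ^ 2 - q) * B ^ q
      + A ^ (q ^ 2) = 0 := by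
    have hmul : u ^ q * ((u ^ (q ^ 2 - q)) ^ q * u ^ (q ^ 2 - q) * A ^ q
        + u ^ (q ^ 2 - q) * B ^ q + A ^ (q ^ 2)) = 0 := by
      linear_combination (A ^ q * (u ^ (q ^ 2 - q)) ^ q + B ^ q) * hm2 + A ^ q * hm2q
        + u ^ (q ^ 3) * hAq + u ^ (q ^ 2) * hBq + u ^ q * hAq2
        + (u ^ q * u ^ (q ^ 2) + u ^ q * u ^ (q ^ 3) + u ^ (q ^ 2) * u ^ (q ^ 3)) * h2
    exact (mul_eq_zero.mp hmul).resolve_left huq0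
  have hc3 : ((u + 1) ^ (q ^ 2 - q)) ^ q * (u + 1) ^ (q ^ 2 - q) * A ^ q
      + (u + 1) ^ (q ^ 2 - q) * B ^ q + A ^ (q ^ 2) = 0 := by
    have hmul : (u + 1) ^ q * (((u + 1) ^ (q ^ 2 - q)) ^ q * (u + 1) ^ (q ^ 2 - q) * A ^ q
        + (u + 1) ^ (q ^ 2 - q) * B ^ q + A ^ (q ^ 2)) = 0 := by
      linear_combination (A ^ q * ((u + 1) ^ (q ^ 2 - q)) ^ q + B ^ q) * hm3 + A ^ q * hm3q
        + A ^ q * hP3 + B ^ q * hP2 + A ^ (q ^ 2) * hP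
        + (u ^ (q ^ 3) + 1) * hAq + (u ^ (q ^ 2) + 1) * hBq + (u ^ q + 1) * hAq2
        + (u ^ q * u ^ (q ^ 2) + u ^ q * u ^ (q ^ 3) + u ^ (q ^ 2) * u ^ (q ^ 3)
            + u ^ q + u ^ (q ^ 2) + u ^ (q ^ 3)) * h2
    exact (mul_eq_zero.mp hmul).resolve_left hP0
  refine ⟨d12, d13, d23, ?_, ?_, ?_⟩
  · rw [hx₁, ha, hdiv 1]
    exact main 1 hc1
  · rw [hx₂, ha, hdiv _]
    exact main _ hc2
  · rw [hx₃, ha, hdiv _]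
    exact main _ hc3
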